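/- Let k₀, k₁, k₂, l₀, l₁, l₂ be six lines in the real projective plane, no three concurrent, all tangent to a common nondegenerate conic. For 1 ≤ i, j ≤ 2 let r_{i,j} be the intersection of the diagonals of the quadrilateral formed by the lines k_{i−1}, l_{j−1}, k_i, l_j. Then the three lines (r_{1,1}, r_{2,1}), (r_{1,2}, r_{2,2}), and l₁ are concurrent, and the three lines (r_{1,1}, r_{1,2}), (r_{2,1}, r_{2,2}), and k₁ are concurrent. -/

import Mathlib

open Submodule

lemma range_triple (x y z : Fin 3 → ℝ) : Set.range ![x,y,z] = {x,y,z} := by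
  rw [Matrix.range_cons, Matrix.range_cons, Matrix.range_cons_empty]; rfl

lemma range_pair (x y : Fin 3 → ℝ) : Set.range ![x,y] = {x,y} := by
  rw [Matrix.range_cons, Matrix.range_cons_empty]; rfl

lemma mem_span_triple' {x y z u : Fin 3 → ℝ} :
    u ∈ span ℝ ({x,y,z} : Set (Fin 3 → ℝ)) ↔ ∃ a b c : ℝ, a•x+b•y+c•z = u := by
  simp only [mem_span_insert, mem_span_singleton]
  constructor
  · rintro ⟨a, w, ⟨b, w2, ⟨c, rfl⟩, rfl⟩, rfl⟩; exact ⟨a, b, c, by abel⟩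
  · rintro ⟨a, b, c, rfl⟩; exact ⟨a, _, ⟨b, _, ⟨c, rfl⟩, rfl⟩, by abel⟩

-- kernel lemma
lemma klem (φ : (Fin 3 → ℝ) →ₗ[ℝ] (Fin 3 → ℝ) →ₗ[ℝ] ℝ) (u w : Fin 3 → ℝ) :
    ∃ z : Fin 3 → ℝ, z ≠ 0 ∧ φ u z = 0 ∧ φ w z = 0 := by
  set L : (Fin 3 → ℝ) →ₗ[ℝ] ℝ × ℝ := (φ u).prod (φ w) with hL
  have hker : LinearMap.ker L ≠ ⊥ := by
    intro h
    have hinj : Function.Injective L := LinearMap.ker_eq_bot.mp h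
    have h2 := LinearMap.finrank_le_finrank_of_injective hinj
    simp at h2
  obtain ⟨z, hz, hz0⟩ := Submodule.exists_mem_ne_zero_of_ne_bot hker
  have : L z = 0 := hz
  rw [hL] at this
  have h1 : (φ u z, φ w z) = (0, 0) := this
  exact ⟨z, hz0, congrArg Prod.fst h1, congrArg Prod.snd h1⟩

-- LI of a triple
lemma li_triple {x y z : Fin 3 → ℝ} (hx : x ≠ 0) (hxy : ∀ c : ℝ, y ≠ c • x)
    (hz : z ∉ span ℝ ({x, y} : Set (Fin 3 → ℝ))) :
    LinearIndependent ℝ ![x, y, z] := by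
  have h2 : LinearIndependent ℝ ![x, y] := by
    rw [linearIndependent_fin2]
    constructor
    · intro h
      simp only [Matrix.cons_val_one, Matrix.head_cons] at h
      exact hxy 0 (by simpa using h)
    · intro a h
      simp only [Matrix.cons_val_one, Matrix.head_cons, Matrix.cons_val_zero] at h
      rcases eq_or_ne a 0 with rfl | ha
      · exact hx (by simpa using h.symm)
      · exact hxy a⁻¹ (by rw [← h]; rw [smul_smul, inv_mul_cancel₀ ha, one_smul])
  have : LinearIndependent ℝ (Fin.snoc ![x,y] z : Fin 3 → Fin 3 → ℝ) := by
    rw [linearIndependent_fin_snoc]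
    exact ⟨h2, by rwa [range_pair]⟩
  convert this using 1
  ext i j
  fin_cases i <;> rfl

lemma coeffs_triple {x y z : Fin 3 → ℝ} (h : LinearIndependent ℝ ![x, y, z])
    {c₀ c₁ c₂ : ℝ} (heq : c₀ • x + c₁ • y + c₂ • z = 0) : c₀ = 0 ∧ c₁ = 0 ∧ c₂ = 0 := by
  have := Fintype.linearIndependent_iff.mp h ![c₀, c₁, c₂]
    (by rw [Fin.sum_univ_three]; simpa using heq)
  exact ⟨this 0, this 1, this 2⟩

lemma span_triple_top {x y z : Fin 3 → ℝ} (h : LinearIndependent ℝ ![x, y, z]) :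
    span ℝ ({x, y, z} : Set (Fin 3 → ℝ)) = ⊤ := by
  rw [← range_triple]
  exact h.span_eq_top_of_card_eq_finrank (by simp)

lemma li_pair {x y : Fin 3 → ℝ} (hx : x ≠ 0) (hy : y ≠ 0) (hxy : ∀ c : ℝ, y ≠ c • x) :
    LinearIndependent ℝ ![x, y] := by
  rw [linearIndependent_fin2]
  refine ⟨fun h => hy (by simpa using h), fun a h => ?_⟩
  simp only [Matrix.cons_val_one, Matrix.head_cons, Matrix.cons_val_zero] at h
  rcases eq_or_ne a 0 with rfl | ha
  · exact hx (by simpa using h.symm)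
  · exact hxy a⁻¹ (by rw [← h, smul_smul, inv_mul_cancel₀ ha, one_smul])

lemma span_pair_eq_of {x y u v : Fin 3 → ℝ}
    (hx : x ∈ span ℝ ({u, v} : Set (Fin 3 → ℝ))) (hy : y ∈ span ℝ ({u, v} : Set (Fin 3 → ℝ)))
    (hx0 : x ≠ 0) (hy0 : y ≠ 0) (hxy : ∀ c : ℝ, y ≠ c • x)
    (hu0 : u ≠ 0) (hv0 : v ≠ 0) (huv : ∀ c : ℝ, v ≠ c • u) :
    span ℝ ({x, y} : Set (Fin 3 → ℝ)) = span ℝ ({u, v} : Set (Fin 3 → ℝ)) := by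
  have hle : span ℝ ({x, y} : Set (Fin 3 → ℝ)) ≤ span ℝ ({u, v} : Set (Fin 3 → ℝ)) := by
    rw [span_le]; rintro w (rfl | rfl) <;> assumption
  refine Submodule.eq_of_le_of_finrank_eq hle ?_
  have f1 : Module.finrank ℝ (span ℝ ({x, y} : Set (Fin 3 → ℝ))) = 2 := by
    rw [← range_pair]
    simpa using finrank_span_eq_card (li_pair hx0 hy0 hxy)
  have f2 : Module.finrank ℝ (span ℝ ({u, v} : Set (Fin 3 → ℝ))) = 2 := by
    rw [← range_pair]
    simpa using finrank_span_eq_card (li_pair hu0 hv0 huv)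
  rw [f1, f2]
lemma core (φ : (Fin 3 → ℝ) →ₗ[ℝ] (Fin 3 → ℝ) →ₗ[ℝ] ℝ)
    (hsymm : ∀ y z, φ y z = φ z y)
    (hnd : ∀ y : Fin 3 → ℝ, (∀ z, φ y z = 0) → y = 0)
    (p q p' q' : Fin 3 → ℝ)
    (hpC : φ p p = 0) (hqC : φ q q = 0) (hp'C : φ p' p' = 0) (hq'C : φ q' q' = 0)
    (h1 : q' ∉ span ℝ ({p, q} : Set (Fin 3 → ℝ)))
    (h2 : p' ∉ span ℝ ({p, q} : Set (Fin 3 → ℝ)))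
    (h3 : p ∉ span ℝ ({p', q'} : Set (Fin 3 → ℝ)))
    (h4 : q ∉ span ℝ ({p', q'} : Set (Fin 3 → ℝ)))
    (h5 : ∀ c : ℝ, q ≠ c • p)
    (h6 : ∀ c : ℝ, q' ≠ c • p')
    (A B C D rr : Fin 3 → ℝ)
    (hA1 : φ p A = 0) (hA2 : φ q A = 0)
    (hB1 : φ p B = 0) (hB2 : φ q' B = 0)
    (hC1 : φ p' C = 0) (hC2 : φ q' C = 0)
    (hD1 : φ p' D = 0) (hD2 : φ q D = 0)
    (hrAC : rr ∈ span ℝ ({A, C} : Set (Fin 3 → ℝ)))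
    (hrBD : rr ∈ span ℝ ({B, D} : Set (Fin 3 → ℝ))) :
    rr ∈ span ℝ ({p, p'} : Set (Fin 3 → ℝ)) ∧ rr ∈ span ℝ ({q, q'} : Set (Fin 3 → ℝ)) := by
  have hp0 : p ≠ 0 := fun h => h3 (h ▸ zero_mem _)
  have hq0 : q ≠ 0 := fun h => h4 (h ▸ zero_mem _)
  have hli := li_triple hp0 h5 h2
  have htop := span_triple_top hli
  have hq'mem : q' ∈ span ℝ ({p, q, p'} : Set (Fin 3 → ℝ)) := htop ▸ mem_top
  obtain ⟨x, y, z, hxyz⟩ := mem_span_triple'.mp hq'mem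
  have hz : z ≠ 0 := by
    rintro rfl
    exact h1 (mem_span_pair.mpr ⟨x, y, by rw [← hxyz]; module⟩)
  have hy : y ≠ 0 := by
    rintro rfl
    rcases eq_or_ne x 0 with rfl | hx
    · exact h6 z (by rw [← hxyz]; module)
    · refine h3 (mem_span_pair.mpr ⟨-(z*x⁻¹), x⁻¹, ?_⟩)
      rw [← hxyz]
      match_scalars <;> field_simp <;> ring
  have hx : x ≠ 0 := by
    rintro rfl
    refine h4 (mem_span_pair.mpr ⟨-(z*y⁻¹), y⁻¹, ?_⟩)
    rw [← hxyz]
    match_scalars <;> field_simp <;> ring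
  -- the three key vectors
  obtain ⟨u, hu⟩ : ∃ w, w = x • p + y • q := ⟨_, rfl⟩
  obtain ⟨s, hs⟩ : ∃ w, w = x • p + z • p' := ⟨_, rfl⟩
  obtain ⟨v, hv⟩ : ∃ w, w = x • p - q' := ⟨_, rfl⟩
  have hus' : u = q' - z • p' := by rw [hu, ← hxyz]; module
  have hvs' : v = -(y • q) - z • p' := by rw [hv, ← hxyz]; module
  have hs' : s = q' - y • q := by rw [hs, ← hxyz]; module
  -- the quadratic relation
  have hR : φ q' q' = 0 := hq'C
  rw [← hxyz] at hR
  simp only [map_add, map_smul, LinearMap.add_apply, LinearMap.smul_apply, smul_eq_mul] at hR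
  have hus : φ u s = 0 := by
    rw [hu, hs]
    simp only [map_add, map_smul, LinearMap.add_apply, LinearMap.smul_apply, smul_eq_mul]
    linear_combination hR/2 + (x^2/2)*hpC - (y^2/2)*hqC - (z^2/2)*hp'C
      + (x*y/2)*(hsymm q p) - (x*z/2)*(hsymm p' p) - (y*z/2)*(hsymm p' q)
  have hvs : φ v s = 0 := by
    rw [hvs', hs]
    simp only [map_add, map_sub, map_neg, map_smul, LinearMap.add_apply, LinearMap.sub_apply,
      LinearMap.neg_apply, LinearMap.smul_apply, smul_eq_mul]
    linear_combination -hR/2 + (x^2/2)*hpC + (y^2/2)*hqC - (z^2/2)*hp'C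
      - (x*y/2)*(hsymm q p) - (x*z/2)*(hsymm p' p) + (y*z/2)*(hsymm p' q)
  -- orthogonality to rr
  obtain ⟨cA, cC, hrac⟩ := mem_span_pair.mp hrAC
  obtain ⟨cB, cD, hrbd⟩ := mem_span_pair.mp hrBD
  have hur : φ u rr = 0 := by
    have huA : φ u A = 0 := by
      rw [hu]; simp only [map_add, map_smul, LinearMap.add_apply, LinearMap.smul_apply,
        smul_eq_mul, hA1, hA2]; ring
    have huC : φ u C = 0 := by
      rw [hus']; simp only [map_sub, map_smul, LinearMap.sub_apply, LinearMap.smul_apply,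
        smul_eq_mul, hC1, hC2]; ring
    rw [← hrac]
    simp only [map_add, map_smul, smul_eq_mul, huA, huC]; ring
  have hvr : φ v rr = 0 := by
    have hvB : φ v B = 0 := by
      rw [hv]; simp only [map_sub, map_smul, LinearMap.sub_apply, LinearMap.smul_apply,
        smul_eq_mul, hB1, hB2]; ring
    have hvD : φ v D = 0 := by
      rw [hvs']; simp only [map_sub, map_neg, map_smul, LinearMap.sub_apply, LinearMap.neg_apply,
        LinearMap.smul_apply, smul_eq_mul, hD1, hD2]; ring
    rw [← hrbd]
    simp only [map_add, map_smul, smul_eq_mul, hvB, hvD]; ring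
  -- span {u, v, s} = ⊤
  have htop2 : span ℝ ({u, v, s} : Set (Fin 3 → ℝ)) = ⊤ := by
    rw [eq_top_iff, ← htop]
    apply span_le.mpr
    intro w hw
    simp only [Set.mem_insert_iff, Set.mem_singleton_iff] at hw
    rcases hw with rfl | rfl | rfl
    · exact mem_span_triple'.mpr ⟨(2*x)⁻¹, (2*x)⁻¹, (2*x)⁻¹, by
        rw [hu, hv, hs, ← hxyz]; match_scalars <;> field_simp <;> ring⟩
    · exact mem_span_triple'.mpr ⟨(2*y)⁻¹, -(2*y)⁻¹, -(2*y)⁻¹, by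
        rw [hu, hv, hs, ← hxyz]; match_scalars <;> field_simp <;> ring⟩
    · exact mem_span_triple'.mpr ⟨-(2*z)⁻¹, -(2*z)⁻¹, (2*z)⁻¹, by
        rw [hu, hv, hs, ← hxyz]; match_scalars <;> field_simp <;> ring⟩
  -- rr is a multiple of s
  obtain ⟨c₁, c₂, c₃, hc⟩ := mem_span_triple'.mp
    (htop2 ▸ mem_top : rr ∈ span ℝ ({u, v, s} : Set (Fin 3 → ℝ)))
  have hw0 : rr - c₃ • s = 0 := by
    apply hnd
    intro zz
    obtain ⟨d₁, d₂, d₃, hd⟩ := mem_span_triple'.mp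
      (htop2 ▸ mem_top : zz ∈ span ℝ ({u, v, s} : Set (Fin 3 → ℝ)))
    have e1 : φ (rr - c₃ • s) u = 0 := by
      rw [hsymm]
      simp only [map_sub, map_smul, smul_eq_mul, hur, hus]; ring
    have e2 : φ (rr - c₃ • s) v = 0 := by
      rw [hsymm]
      simp only [map_sub, map_smul, smul_eq_mul, hvr, hvs]; ring
    have e3 : φ (rr - c₃ • s) s = 0 := by
      have hw' : rr - c₃ • s = c₁ • u + c₂ • v := by rw [← hc]; abel
      rw [hw']
      simp only [map_add, map_smul, LinearMap.add_apply, LinearMap.smul_apply,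
        smul_eq_mul, hus, hvs]; ring
    rw [← hd]
    simp only [map_add, map_smul, smul_eq_mul, e1, e2, e3]; ring
  have hrs : rr = c₃ • s := by
    have := sub_eq_zero.mp hw0; exact this
  constructor
  · exact mem_span_pair.mpr ⟨c₃ * x, c₃ * z, by rw [hrs, hs]; module⟩
  · exact mem_span_pair.mpr ⟨-(c₃ * y), c₃, by rw [hrs, hs']; module⟩
lemma indep_of_chords {c d e u v x y : Fin 3 → ℝ}
    (hLI : LinearIndependent ℝ ![c, d, e])
    (hx1 : x ∈ span ℝ ({c, d} : Set (Fin 3 → ℝ)))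
    (hy1 : y ∈ span ℝ ({d, e} : Set (Fin 3 → ℝ)))
    (hx0 : x ≠ 0)
    (hx2 : x ∈ span ℝ ({u, v} : Set (Fin 3 → ℝ)))
    (hd : d ∉ span ℝ ({u, v} : Set (Fin 3 → ℝ))) (hy0 : y ≠ 0) :
    ∀ k : ℝ, y ≠ k • x := by
  intro k hk
  have hk0 : k ≠ 0 := by rintro rfl; rw [zero_smul] at hk; exact hy0 hk
  have hxk : x = k⁻¹ • y := by rw [hk, smul_smul, inv_mul_cancel₀ hk0, one_smul]
  have hxde : x ∈ span ℝ ({d, e} : Set (Fin 3 → ℝ)) := by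
    rw [hxk]; exact smul_mem _ _ hy1
  obtain ⟨α, β, hab⟩ := mem_span_pair.mp hx1
  obtain ⟨γ, δ, hgd⟩ := mem_span_pair.mp hxde
  have h0 : α • c + (β - γ) • d + (-δ) • e = 0 := by
    have h1 : (α • c + β • d) - (γ • d + δ • e) = 0 := by
      rw [hab, hgd]; abel
    rw [← h1]; module
  obtain ⟨hα, _, hδ⟩ := coeffs_triple hLI h0
  have hxd : x = β • d := by rw [← hab, hα]; module
  have hβ : β ≠ 0 := by rintro rfl; rw [hxd, zero_smul] at hx0; exact hx0 rfl
  have : d = β⁻¹ • x := by rw [hxd, smul_smul, inv_mul_cancel₀ hβ, one_smul]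
  exact hd (this ▸ smul_mem _ _ hx2)

theorem stmt18 (φ : (Fin 3 → ℝ) →ₗ[ℝ] (Fin 3 → ℝ) →ₗ[ℝ] ℝ)
    (hsymm : ∀ y z, φ y z = φ z y)
    (hnd : ∀ y : Fin 3 → ℝ, (∀ z, φ y z = 0) → y = 0)
    (a b : Fin 3 → Fin 3 → ℝ)
    (ha : ∀ i, a i ≠ 0) (hb : ∀ i, b i ≠ 0)
    (hac : ∀ i, φ (a i) (a i) = 0) (hbc : ∀ i, φ (b i) (b i) = 0)
    (t : Fin 6 → Fin 3 → ℝ) (ht : t = ![a 0, a 1, a 2, b 0, b 1, b 2])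
    -- genericity: no three of the six tangent lines are concurrent
    (hgen : ∀ (i j k : Fin 6), i ≠ j → i ≠ k → j ≠ k →
        ∀ z : Fin 3 → ℝ, z ≠ 0 →
          ¬ (φ (t i) z = 0 ∧ φ (t j) z = 0 ∧ φ (t k) z = 0))
    (r : Fin 2 → Fin 2 → Fin 3 → ℝ)
    -- r i j is the diagonal intersection point of the quadrilateral formed by
    -- k_i = polar (a i), l_j = polar (b j), k_{i+1} = polar (a (i+1)), l_{j+1} = polar (b (j+1))
    (hr : ∀ i j : Fin 2, r i j ≠ 0 ∧ ∃ A B C D : Fin 3 → ℝ,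
        A ≠ 0 ∧ B ≠ 0 ∧ C ≠ 0 ∧ D ≠ 0 ∧
        φ (a i.castSucc) A = 0 ∧ φ (b j.castSucc) A = 0 ∧
        φ (a i.castSucc) B = 0 ∧ φ (b j.succ) B = 0 ∧
        φ (a i.succ) C = 0 ∧ φ (b j.succ) C = 0 ∧
        φ (a i.succ) D = 0 ∧ φ (b j.castSucc) D = 0 ∧
        r i j ∈ Submodule.span ℝ ({A, C} : Set (Fin 3 → ℝ)) ∧
        r i j ∈ Submodule.span ℝ ({B, D} : Set (Fin 3 → ℝ))) :
    (∃ m : Fin 3 → ℝ, m ≠ 0 ∧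
        m ∈ Submodule.span ℝ ({r 0 0, r 1 0} : Set (Fin 3 → ℝ)) ∧
        m ∈ Submodule.span ℝ ({r 0 1, r 1 1} : Set (Fin 3 → ℝ)) ∧
        φ (b 1) m = 0) ∧
    (∃ m : Fin 3 → ℝ, m ≠ 0 ∧
        m ∈ Submodule.span ℝ ({r 0 0, r 0 1} : Set (Fin 3 → ℝ)) ∧
        m ∈ Submodule.span ℝ ({r 1 0, r 1 1} : Set (Fin 3 → ℝ)) ∧
        φ (a 1) m = 0) := by
  classical
  -- index embeddings
  set ia : Fin 3 → Fin 6 := Fin.castLE (by norm_num) with hia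
  set ib : Fin 3 → Fin 6 := fun m => ⟨m.val + 3, by omega⟩ with hib
  have hta : ∀ m : Fin 3, t (ia m) = a m := by
    intro m; fin_cases m <;> (rw [ht]; rfl)
  have htb : ∀ m : Fin 3, t (ib m) = b m := by
    intro m; fin_cases m <;> (rw [ht]; rfl)
  have hab_ne : ∀ (m n : Fin 3), ia m ≠ ib n := by
    intro m n h
    have := congrArg Fin.val h
    simp [hia, hib] at this
    omega
  have hia_ne : ∀ (m n : Fin 3), m ≠ n → ia m ≠ ia n := by
    intro m n hmn h
    exact hmn (Fin.castLE_injective _ h)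
  have hib_ne : ∀ (m n : Fin 3), m ≠ n → ib m ≠ ib n := by
    intro m n hmn h
    have := congrArg Fin.val h
    simp [hib] at this
    exact hmn (Fin.val_injective this)
  have htne : ∀ i : Fin 6, t i ≠ 0 := by
    intro i
    fin_cases i
    · rw [ht]; exact ha 0
    · rw [ht]; exact ha 1
    · rw [ht]; exact ha 2
    · rw [ht]; exact hb 0
    · rw [ht]; exact hb 1
    · rw [ht]; exact hb 2
  have hiso : ∀ i : Fin 6, φ (t i) (t i) = 0 := by
    intro i
    fin_cases i
    · rw [ht]; exact hac 0
    · rw [ht]; exact hac 1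
    · rw [ht]; exact hac 2
    · rw [ht]; exact hbc 0
    · rw [ht]; exact hbc 1
    · rw [ht]; exact hbc 2
  have h3rd : ∀ i j : Fin 6, ∃ k, k ≠ i ∧ k ≠ j := by decide
  -- no two of the six tangency points are proportional
  have hprop : ∀ i j : Fin 6, i ≠ j → ∀ c : ℝ, t i ≠ c • t j := by
    intro i j hij c hc
    obtain ⟨k, hki, hkj⟩ := h3rd i j
    obtain ⟨zz, hz0, hz1, hz2⟩ := klem φ (t j) (t k)
    refine hgen i j k hij (Ne.symm hki) (Ne.symm hkj) zz hz0 ⟨?_, hz1, hz2⟩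
    rw [hc]
    simp only [map_smul, LinearMap.smul_apply, smul_eq_mul, hz1, mul_zero]
  -- no three of the six tangency points are collinear
  have hnotspan : ∀ i j k : Fin 6, i ≠ j → i ≠ k → j ≠ k →
      t i ∉ span ℝ ({t j, t k} : Set (Fin 3 → ℝ)) := by
    intro i j k hij hik hjk hmem
    obtain ⟨α, β, heq⟩ := mem_span_pair.mp hmem
    by_cases h0 : φ (t j) (t k) = 0
    · refine hgen i j k hij hik hjk (t k) (htne k) ⟨?_, h0, hiso k⟩
      rw [← heq]
      simp only [map_add, map_smul, LinearMap.add_apply, LinearMap.smul_apply, smul_eq_mul,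
        h0, hiso k, mul_zero, add_zero]
    · have hexp : φ (α • t j + β • t k) (α • t j + β • t k) = 0 := by rw [heq]; exact hiso i
      simp only [map_add, map_smul, LinearMap.add_apply, LinearMap.smul_apply,
        smul_eq_mul] at hexp
      have h2 : α * β * φ (t j) (t k) = 0 := by
        linear_combination hexp/2 - (α^2/2)*(hiso j) - (β^2/2)*(hiso k)
          + (α*β/2)*(hsymm (t j) (t k))
      have hab : α * β = 0 := by
        rcases mul_eq_zero.mp h2 with h | h
        · exact h
        · exact absurd h h0
      rcases mul_eq_zero.mp hab with h | h
      · exact hprop i k hik β (by rw [← heq, h]; module)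
      · exact hprop i j hij α (by rw [← heq, h]; module)
  -- each r i j lies on both chords of contact
  have hr' : ∀ i j : Fin 2,
      r i j ∈ span ℝ ({a i.castSucc, a i.succ} : Set (Fin 3 → ℝ)) ∧
      r i j ∈ span ℝ ({b j.castSucc, b j.succ} : Set (Fin 3 → ℝ)) := by
    intro i j
    obtain ⟨hrne, A, B, C, D, hA0, hB0, hC0, hD0, hA1, hA2, hB1, hB2,
      hC1, hC2, hD1, hD2, hAC, hBD⟩ := hr i j
    have hi01 : i.castSucc ≠ i.succ := (Fin.castSucc_lt_succ : i.castSucc < i.succ).ne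
    have hj01 : j.castSucc ≠ j.succ := (Fin.castSucc_lt_succ : j.castSucc < j.succ).ne
    have h1 : b j.succ ∉ span ℝ ({a i.castSucc, b j.castSucc} : Set (Fin 3 → ℝ)) := by
      have := hnotspan (ib j.succ) (ia i.castSucc) (ib j.castSucc)
        (hab_ne _ _).symm (hib_ne _ _ hj01.symm) (hab_ne _ _)
      simpa only [hta, htb] using this
    have h2 : a i.succ ∉ span ℝ ({a i.castSucc, b j.castSucc} : Set (Fin 3 → ℝ)) := by
      have := hnotspan (ia i.succ) (ia i.castSucc) (ib j.castSucc)
        (hia_ne _ _ hi01.symm) (hab_ne _ _) (hab_ne _ _)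
      simpa only [hta, htb] using this
    have h3 : a i.castSucc ∉ span ℝ ({a i.succ, b j.succ} : Set (Fin 3 → ℝ)) := by
      have := hnotspan (ia i.castSucc) (ia i.succ) (ib j.succ)
        (hia_ne _ _ hi01) (hab_ne _ _) (hab_ne _ _)
      simpa only [hta, htb] using this
    have h4 : b j.castSucc ∉ span ℝ ({a i.succ, b j.succ} : Set (Fin 3 → ℝ)) := by
      have := hnotspan (ib j.castSucc) (ia i.succ) (ib j.succ)
        (hab_ne _ _).symm (hib_ne _ _ hj01) (hab_ne _ _)
      simpa only [hta, htb] using this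
    have h5 : ∀ c : ℝ, b j.castSucc ≠ c • a i.castSucc := by
      intro c
      have := hprop (ib j.castSucc) (ia i.castSucc) (hab_ne _ _).symm c
      rwa [hta, htb] at this
    have h6 : ∀ c : ℝ, b j.succ ≠ c • a i.succ := by
      intro c
      have := hprop (ib j.succ) (ia i.succ) (hab_ne _ _).symm c
      rwa [hta, htb] at this
    exact core φ hsymm hnd (a i.castSucc) (b j.castSucc) (a i.succ) (b j.succ)
      (hac _) (hbc _) (hac _) (hbc _) h1 h2 h3 h4 h5 h6 A B C D (r i j)
      hA1 hA2 hB1 hB2 hC1 hC2 hD1 hD2 hAC hBD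
  -- concrete index computations
  have e0c : ((0 : Fin 2).castSucc : Fin 3) = 0 := rfl
  have e0s : ((0 : Fin 2).succ : Fin 3) = 1 := rfl
  have e1c : ((1 : Fin 2).castSucc : Fin 3) = 1 := rfl
  have e1s : ((1 : Fin 2).succ : Fin 3) = 2 := rfl
  have h00a : r 0 0 ∈ span ℝ ({a 0, a 1} : Set (Fin 3 → ℝ)) := by
    have := (hr' 0 0).1; rwa [e0c, e0s] at this
  have h00b : r 0 0 ∈ span ℝ ({b 0, b 1} : Set (Fin 3 → ℝ)) := by
    have := (hr' 0 0).2; rwa [e0c, e0s] at this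
  have h10a : r 1 0 ∈ span ℝ ({a 1, a 2} : Set (Fin 3 → ℝ)) := by
    have := (hr' 1 0).1; rwa [e1c, e1s] at this
  have h10b : r 1 0 ∈ span ℝ ({b 0, b 1} : Set (Fin 3 → ℝ)) := by
    have := (hr' 1 0).2; rwa [e0c, e0s] at this
  have h01a : r 0 1 ∈ span ℝ ({a 0, a 1} : Set (Fin 3 → ℝ)) := by
    have := (hr' 0 1).1; rwa [e0c, e0s] at this
  have h01b : r 0 1 ∈ span ℝ ({b 1, b 2} : Set (Fin 3 → ℝ)) := by
    have := (hr' 0 1).2; rwa [e1c, e1s] at this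
  have h11a : r 1 1 ∈ span ℝ ({a 1, a 2} : Set (Fin 3 → ℝ)) := by
    have := (hr' 1 1).1; rwa [e1c, e1s] at this
  have h11b : r 1 1 ∈ span ℝ ({b 1, b 2} : Set (Fin 3 → ℝ)) := by
    have := (hr' 1 1).2; rwa [e1c, e1s] at this
  -- linear independence of the tangency points
  have hpropa : ∀ m n : Fin 3, m ≠ n → ∀ c : ℝ, a m ≠ c • a n := by
    intro m n hmn c
    have := hprop (ia m) (ia n) (hia_ne _ _ hmn) c
    rwa [hta, hta] at this
  have hpropb : ∀ m n : Fin 3, m ≠ n → ∀ c : ℝ, b m ≠ c • b n := by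
    intro m n hmn c
    have := hprop (ib m) (ib n) (hib_ne _ _ hmn) c
    rwa [htb, htb] at this
  have LIa : LinearIndependent ℝ ![a 0, a 1, a 2] := by
    refine li_triple (ha 0) (fun c => hpropa 1 0 (by decide) c) ?_
    have := hnotspan (ia 2) (ia 0) (ia 1)
      (hia_ne _ _ (by decide)) (hia_ne _ _ (by decide)) (hia_ne _ _ (by decide))
    simpa only [hta] using this
  have LIb : LinearIndependent ℝ ![b 0, b 1, b 2] := by
    refine li_triple (hb 0) (fun c => hpropb 1 0 (by decide) c) ?_
    have := hnotspan (ib 2) (ib 0) (ib 1)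
      (hib_ne _ _ (by decide)) (hib_ne _ _ (by decide)) (hib_ne _ _ (by decide))
    simpa only [htb] using this
  have ha1nb01 : a 1 ∉ span ℝ ({b 0, b 1} : Set (Fin 3 → ℝ)) := by
    have := hnotspan (ia 1) (ib 0) (ib 1)
      (hab_ne _ _) (hab_ne _ _) (hib_ne _ _ (by decide))
    simpa only [hta, htb] using this
  have ha1nb12 : a 1 ∉ span ℝ ({b 1, b 2} : Set (Fin 3 → ℝ)) := by
    have := hnotspan (ia 1) (ib 1) (ib 2)
      (hab_ne _ _) (hab_ne _ _) (hib_ne _ _ (by decide))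
    simpa only [hta, htb] using this
  have hb1na01 : b 1 ∉ span ℝ ({a 0, a 1} : Set (Fin 3 → ℝ)) := by
    have := hnotspan (ib 1) (ia 0) (ia 1)
      (hab_ne _ _).symm (hab_ne _ _).symm (hia_ne _ _ (by decide))
    simpa only [hta, htb] using this
  have hb1na12 : b 1 ∉ span ℝ ({a 1, a 2} : Set (Fin 3 → ℝ)) := by
    have := hnotspan (ib 1) (ia 1) (ia 2)
      (hab_ne _ _).symm (hab_ne _ _).symm (hia_ne _ _ (by decide))
    simpa only [hta, htb] using this
  constructor
  · -- first concurrency: at b 1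
    have E1 : span ℝ ({r 0 0, r 1 0} : Set (Fin 3 → ℝ)) = span ℝ ({b 0, b 1} : Set (Fin 3 → ℝ)) :=
      span_pair_eq_of h00b h10b (hr 0 0).1 (hr 1 0).1
        (indep_of_chords LIa h00a h10a (hr 0 0).1 h00b ha1nb01 (hr 1 0).1)
        (hb 0) (hb 1) (fun c => hpropb 1 0 (by decide) c)
    have E2 : span ℝ ({r 0 1, r 1 1} : Set (Fin 3 → ℝ)) = span ℝ ({b 1, b 2} : Set (Fin 3 → ℝ)) :=
      span_pair_eq_of h01b h11b (hr 0 1).1 (hr 1 1).1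
        (indep_of_chords LIa h01a h11a (hr 0 1).1 h01b ha1nb12 (hr 1 1).1)
        (hb 1) (hb 2) (fun c => hpropb 2 1 (by decide) c)
    exact ⟨b 1, hb 1,
      by rw [E1]; exact subset_span (by simp),
      by rw [E2]; exact subset_span (by simp),
      hbc 1⟩
  · -- second concurrency: at a 1
    have E3 : span ℝ ({r 0 0, r 0 1} : Set (Fin 3 → ℝ)) = span ℝ ({a 0, a 1} : Set (Fin 3 → ℝ)) :=
      span_pair_eq_of h00a h01a (hr 0 0).1 (hr 0 1).1
        (indep_of_chords LIb h00b h01b (hr 0 0).1 h00a hb1na01 (hr 0 1).1)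
        (ha 0) (ha 1) (fun c => hpropa 1 0 (by decide) c)
    have E4 : span ℝ ({r 1 0, r 1 1} : Set (Fin 3 → ℝ)) = span ℝ ({a 1, a 2} : Set (Fin 3 → ℝ)) :=
      span_pair_eq_of h10a h11a (hr 1 0).1 (hr 1 1).1
        (indep_of_chords LIb h10b h11b (hr 1 0).1 h10a hb1na12 (hr 1 1).1)
        (ha 1) (ha 2) (fun c => hpropa 2 1 (by decide) c)
    exact ⟨a 1, ha 1,
      by rw [E3]; exact subset_span (by simp),
      by rw [E4]; exact subset_span (by simp),
      hac 1⟩
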